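/- Let X₁ and X₂ be independent Poisson point processes on S = [0,1] × ℝ with intensities λ₁(x,y) = f_D(x) n J₁ 1_{\{y ≤ θ(x)\}} and λ₂(x,y) = f_D(x) n J₂ 1_{\{y ≥ θ(x)\}} restricted to a bounded band, for boundary functions θ = θ₁ and θ = θ₂. Then the squared Hellinger distance between the two joint observation laws equals 2(1 - exp(-(n/2)(J₁+J₂) ∫₀¹ |θ₁(x) - θ₂(x)| f_D(x) dx)). -/

import Mathlib

open Set MeasureTheory
open scoped ENNReal

/-- The law of a Poisson point process with finite intensity measure `ν`, represented on the
space of finite ordered point configurations `(n : ℕ) × (Fin n → E)`. -/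
noncomputable def pppLaw {E : Type*} [MeasurableSpace E] (ν : Measure E) [SigmaFinite ν] :
    Measure ((n : ℕ) × (Fin n → E)) :=
  Measure.sum (fun n => (ENNReal.ofReal (Real.exp (-(ν Set.univ).toReal)) / n.factorial) •
    Measure.map (Sigma.mk n) (Measure.pi (fun _ : Fin n => ν)))

/-- Squared Hellinger distance between two measures. -/
noncomputable def hellingerSq {Ω : Type*} [MeasurableSpace Ω] (P Q : Measure Ω) : ℝ :=
  ∫ ω, (Real.sqrt ((P.rnDeriv (P + Q)) ω).toReal -
    Real.sqrt ((Q.rnDeriv (P + Q)) ω).toReal) ^ 2 ∂(P + Q)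

/-- Intensity measure of the lower Poisson point process in the band
`S = [0,1] × [-C-1, C+1]`, with points below the graph of `θ`:
`λ₁(x,y) = f_D(x) n J₁ 1_{-C-1 ≤ y ≤ θ(x)}`. -/
noncomputable def lowerIntensity (C J₁ : ℝ) (fD : ℝ → ℝ) (n : ℕ) (θ : ℝ → ℝ) :
    Measure (ℝ × ℝ) :=
  (volume : Measure (ℝ × ℝ)).withDensity fun z =>
    ENNReal.ofReal (Set.indicator
      {z : ℝ × ℝ | z.1 ∈ Icc (0:ℝ) 1 ∧ z.2 ∈ Icc (-C - 1) (θ z.1)}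
      (fun z => fD z.1 * n * J₁) z)

/-- Intensity measure of the upper Poisson point process: points above the graph of `θ`. -/
noncomputable def upperIntensity (C J₂ : ℝ) (fD : ℝ → ℝ) (n : ℕ) (θ : ℝ → ℝ) :
    Measure (ℝ × ℝ) :=
  (volume : Measure (ℝ × ℝ)).withDensity fun z =>
    ENNReal.ofReal (Set.indicator
      {z : ℝ × ℝ | z.1 ∈ Icc (0:ℝ) 1 ∧ z.2 ∈ Icc (θ z.1) (C + 1)}
      (fun z => fD z.1 * n * J₂) z)



section SigmaAPI
variable {β : ℕ → Type*} [∀ n, MeasurableSpace (β n)]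

lemma my_measurable_sigmaMk (n : ℕ) : Measurable (@Sigma.mk ℕ β n) :=
  measurable_iff_le_map.2 (iInf_le _ n)

lemma my_measurableSet_sigma_iff {s : Set (Σ n, β n)} :
    MeasurableSet s ↔ ∀ n, MeasurableSet (Sigma.mk n ⁻¹' s) :=
  MeasurableSpace.measurableSet_iInf

lemma my_measurable_sigma {γ : Type*} [MeasurableSpace γ] {f : (Σ n, β n) → γ}
    (hf : ∀ n, Measurable (fun x => f (Sigma.mk n x))) : Measurable f := by
  intro s hs
  rw [my_measurableSet_sigma_iff]
  exact fun n => hf n hs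

lemma my_measurableEmbedding_sigmaMk (n : ℕ) : MeasurableEmbedding (@Sigma.mk ℕ β n) where
  injective := sigma_mk_injective
  measurable := my_measurable_sigmaMk n
  measurableSet_image' := by
    intro s hs
    rw [my_measurableSet_sigma_iff]
    intro m
    rcases eq_or_ne m n with rfl | hmn
    · rwa [preimage_image_eq _ sigma_mk_injective]
    · have : Sigma.mk m ⁻¹' (Sigma.mk n '' s) = ∅ := by
        ext x
        simp only [mem_preimage, mem_image, mem_empty_iff_false, iff_false]
        rintro ⟨y, -, h⟩
        exact hmn (congrArg Sigma.fst h).symm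
      rw [this]
      exact MeasurableSet.empty

end SigmaAPI

section MapWithDensity

lemma my_map_withDensity {α γ : Type*} [MeasurableSpace α] [MeasurableSpace γ]
    {e : α → γ} (he : MeasurableEmbedding e) (μ : Measure α) {F : γ → ℝ≥0∞}
    (hF : Measurable F) :
    (Measure.map e μ).withDensity F = Measure.map e (μ.withDensity (fun a => F (e a))) := by
  ext s hs
  rw [withDensity_apply _ hs, he.map_apply, withDensity_apply _ (he.measurable hs),
    setLIntegral_map hs hF he.measurable]

end MapWithDensity

section PiLemmas
variable {E : Type*} [MeasurableSpace E] (ρ : Measure E) [IsFiniteMeasure ρ]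

lemma my_lintegral_pi_prod : ∀ (n : ℕ) (f : Fin n → E → ℝ≥0∞), (∀ i, Measurable (f i)) →
    ∫⁻ x, ∏ i, f i (x i) ∂(Measure.pi fun _ : Fin n => ρ) = ∏ i, ∫⁻ y, f i y ∂ρ := by
  intro n
  induction n with
  | zero =>
      intro f hf
      simp [lintegral_const, Measure.pi_univ]
  | succ n ih =>
      intro f hf
      have hmp : MeasurePreserving ((MeasurableEquiv.piFinSuccAbove (fun _ : Fin (n+1) => E) 0).symm)
          (ρ.prod (Measure.pi fun _ : Fin n => ρ)) (Measure.pi fun _ : Fin (n+1) => ρ) :=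
        (measurePreserving_piFinSuccAbove (fun _ : Fin (n+1) => ρ) 0).symm
      have hmeas : Measurable fun x : Fin (n+1) → E => ∏ i, f i (x i) :=
        Finset.measurable_prod _ fun i _ => (hf i).comp (measurable_pi_apply i)
      rw [← hmp.lintegral_comp hmeas]
      have hpt : ∀ z : E × (Fin n → E),
          (∏ i, f i (((MeasurableEquiv.piFinSuccAbove (fun _ : Fin (n+1) => E) 0).symm z) i))
          = f 0 z.1 * ∏ i : Fin n, f i.succ (z.2 i) := by
        rintro ⟨y, x⟩
        have hsymm : ((MeasurableEquiv.piFinSuccAbove (fun _ : Fin (n+1) => E) 0).symm (y, x))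
            = Fin.insertNth 0 y x := rfl
        rw [hsymm, Fin.prod_univ_succ, Fin.insertNth_apply_same]
        refine congrArg _ (Finset.prod_congr rfl fun i _ => congrArg (f i.succ) ?_)
        rw [← Fin.zero_succAbove i, Fin.insertNth_apply_succAbove]
      simp_rw [hpt]
      rw [lintegral_prod_mul (f := f 0) (g := fun b : Fin n → E => ∏ i, f i.succ (b i))
        ((hf 0).aemeasurable)
        ((Finset.measurable_prod _ fun i _ => (hf i.succ).comp (measurable_pi_apply i)).aemeasurable),
        ih _ (fun i => hf i.succ), Fin.prod_univ_succ]

lemma my_pi_withDensity (n : ℕ) {f : E → ℝ≥0∞} (hf : Measurable f)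
    [IsFiniteMeasure (ρ.withDensity f)] :
    Measure.pi (fun _ : Fin n => ρ.withDensity f)
      = (Measure.pi fun _ : Fin n => ρ).withDensity fun x => ∏ i, f (x i) := by
  refine Measure.pi_eq fun s hs => ?_
  have hmeas : Measurable fun x : Fin n → E => ∏ i, f (x i) :=
    Finset.measurable_prod _ fun i _ => hf.comp (measurable_pi_apply i)
  rw [withDensity_apply _ (MeasurableSet.univ_pi hs), ← lintegral_indicator (MeasurableSet.univ_pi hs)]
  have hind : (univ.pi s).indicator (fun x : Fin n → E => ∏ i, f (x i))
      = fun x => ∏ i, (s i).indicator f (x i) := by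
    funext x
    by_cases hx : x ∈ univ.pi s
    · rw [indicator_of_mem hx]
      exact Finset.prod_congr rfl fun i _ => (indicator_of_mem (hx i (mem_univ i)) f).symm
    · rw [indicator_of_notMem hx]
      rw [mem_pi] at hx
      push_neg at hx
      obtain ⟨i, -, hi⟩ := hx
      exact (Finset.prod_eq_zero (Finset.mem_univ i) (indicator_of_notMem hi f)).symm
  rw [hind, my_lintegral_pi_prod ρ n _ (fun i => hf.indicator (hs i))]
  refine Finset.prod_congr rfl fun i _ => ?_
  rw [lintegral_indicator (hs i), withDensity_apply _ (hs i)]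

end PiLemmas

section ProdWithDensity

lemma my_prod_withDensity {α β' : Type*} [MeasurableSpace α] [MeasurableSpace β']
    (μ : Measure α) (ν : Measure β') [IsFiniteMeasure μ] [IsFiniteMeasure ν]
    {f : α → ℝ≥0∞} {g : β' → ℝ≥0∞} (hf : Measurable f) (hg : Measurable g)
    [IsFiniteMeasure (μ.withDensity f)] [IsFiniteMeasure (ν.withDensity g)] :
    (μ.withDensity f).prod (ν.withDensity g)
      = (μ.prod ν).withDensity fun z => f z.1 * g z.2 := by
  refine (Measure.prod_eq (μ := μ.withDensity f) (ν := ν.withDensity g) fun s t hs ht => ?_)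
  have hmeas : Measurable fun z : α × β' => f z.1 * g z.2 :=
    (hf.comp measurable_fst).mul (hg.comp measurable_snd)
  rw [withDensity_apply _ (hs.prod ht), ← lintegral_indicator (hs.prod ht)]
  have hind : (s ×ˢ t).indicator (fun z : α × β' => f z.1 * g z.2)
      = fun z => s.indicator f z.1 * t.indicator g z.2 := by
    funext z
    by_cases hz : z ∈ s ×ˢ t
    · rw [indicator_of_mem hz, indicator_of_mem hz.1, indicator_of_mem hz.2]
    · rw [indicator_of_notMem hz]
      rw [mem_prod] at hz
      push_neg at hz
      by_cases hz1 : z.1 ∈ s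
      · rw [indicator_of_notMem (hz hz1), mul_zero]
      · rw [indicator_of_notMem hz1, zero_mul]
  rw [hind, lintegral_prod_mul (hf.indicator hs).aemeasurable (hg.indicator ht).aemeasurable,
    lintegral_indicator hs, lintegral_indicator ht, withDensity_apply _ hs, withDensity_apply _ ht]

end ProdWithDensity

section PPP
open scoped ENNReal
open Set MeasureTheory

/-- Unnormalized "Poissonization" of a finite measure. -/
noncomputable def pppBase {E : Type*} [MeasurableSpace E] (ρ : Measure E) :
    Measure ((n : ℕ) × (Fin n → E)) :=
  Measure.sum fun n => ((n.factorial : ℝ≥0∞))⁻¹ •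
    Measure.map (Sigma.mk n) (Measure.pi fun _ : Fin n => ρ)

lemma my_tsum_pow_div_factorial {r : ℝ≥0∞} (hr : r ≠ ∞) :
    ∑' n : ℕ, r ^ n / (n.factorial : ℝ≥0∞) = ENNReal.ofReal (Real.exp r.toReal) := by
  have h0 : 0 ≤ r.toReal := ENNReal.toReal_nonneg
  have hexp : Real.exp r.toReal = ∑' n : ℕ, r.toReal ^ n / (n.factorial : ℝ) := by
    rw [Real.exp_eq_exp_ℝ, NormedSpace.exp_eq_tsum_div]
  rw [hexp, ENNReal.ofReal_tsum_of_nonneg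
      (fun n => by positivity) (Real.summable_pow_div_factorial _)]
  refine tsum_congr fun n => ?_
  have hnpos : (0:ℝ) < (n.factorial : ℝ) := by exact_mod_cast n.factorial_pos
  rw [ENNReal.ofReal_div_of_pos hnpos, ENNReal.ofReal_pow h0, ENNReal.ofReal_toReal hr,
    ENNReal.ofReal_natCast]

lemma my_lintegral_pppBase {E : Type*} [MeasurableSpace E] (ρ : Measure E) [IsFiniteMeasure ρ]
    {g : E → ℝ≥0∞} (hg : Measurable g) (hfin : ∫⁻ y, g y ∂ρ ≠ ∞) :
    ∫⁻ p, (∏ i, g (p.2 i)) ∂(pppBase ρ)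
      = ENNReal.ofReal (Real.exp (∫⁻ y, g y ∂ρ).toReal) := by
  have hGn : ∀ n : ℕ, Measurable fun x : Fin n → E => ∏ i, g (x i) := fun n =>
    Finset.measurable_prod _ fun i _ => hg.comp (measurable_pi_apply i)
  have hG : Measurable fun p : (n : ℕ) × (Fin n → E) => ∏ i, g (p.2 i) :=
    my_measurable_sigma fun n => hGn n
  rw [pppBase, lintegral_sum_measure]
  have hterm : ∀ n : ℕ, ∫⁻ p : (m : ℕ) × (Fin m → E), (∏ i, g (p.2 i))
      ∂(((n.factorial : ℝ≥0∞))⁻¹ • Measure.map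
          (@Sigma.mk ℕ (fun m => Fin m → E) n) (Measure.pi fun _ : Fin n => ρ))
      = (∫⁻ y, g y ∂ρ) ^ n / (n.factorial : ℝ≥0∞) := by
    intro n
    rw [lintegral_smul_measure, lintegral_map hG (my_measurable_sigmaMk n)]
    have : ∫⁻ x : Fin n → E, ∏ i, g (x i) ∂(Measure.pi fun _ : Fin n => ρ)
        = (∫⁻ y, g y ∂ρ) ^ n := by
      rw [my_lintegral_pi_prod ρ n (fun _ => g) (fun _ => hg), Finset.prod_const,
        Finset.card_univ, Fintype.card_fin]
    rw [this, ENNReal.div_eq_inv_mul, smul_eq_mul]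
  rw [tsum_congr hterm, my_tsum_pow_div_factorial hfin]

lemma my_pppBase_finite {E : Type*} [MeasurableSpace E] (ρ : Measure E) [IsFiniteMeasure ρ] :
    IsFiniteMeasure (pppBase ρ) := by
  constructor
  have h1 : (pppBase ρ) univ = ∫⁻ p, (∏ i, (fun _ : E => (1:ℝ≥0∞)) (p.2 i)) ∂(pppBase ρ) := by
    simp
  rw [h1, my_lintegral_pppBase ρ measurable_const (by simp [measure_ne_top])]
  exact ENNReal.ofReal_lt_top

lemma my_pppLaw_congr {E : Type*} [MeasurableSpace E] {μ ν : Measure E} [SigmaFinite μ]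
    [SigmaFinite ν] (h : μ = ν) : pppLaw μ = pppLaw ν := by subst h; rfl

lemma my_pppLaw_eq {E : Type*} [MeasurableSpace E] (ρ : Measure E) [IsFiniteMeasure ρ]
    {f : E → ℝ≥0∞} (hf : Measurable f) [IsFiniteMeasure (ρ.withDensity f)] :
    pppLaw (ρ.withDensity f) = (pppBase ρ).withDensity
      (fun p => ENNReal.ofReal (Real.exp (-(((ρ.withDensity f) Set.univ)).toReal))
        * ∏ i, f (p.2 i)) := by
  set c := ENNReal.ofReal (Real.exp (-(((ρ.withDensity f) Set.univ)).toReal)) with hc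
  have hGn : ∀ n : ℕ, Measurable fun x : Fin n → E => ∏ i, f (x i) := fun n =>
    Finset.measurable_prod _ fun i _ => hf.comp (measurable_pi_apply i)
  have hF : Measurable fun p : (n : ℕ) × (Fin n → E) => c * ∏ i, f (p.2 i) :=
    (my_measurable_sigma fun n => hGn n).const_mul c
  rw [pppBase, withDensity_sum]
  unfold pppLaw
  congr 1
  funext n
  rw [withDensity_smul_measure,
    my_map_withDensity (my_measurableEmbedding_sigmaMk n) _ hF]
  have hcomp : (fun x : Fin n → E => c * ∏ i, f (x i)) = c • fun x => ∏ i, f (x i) := rfl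
  rw [hcomp, withDensity_smul c (hGn n), ← my_pi_withDensity ρ n hf, Measure.map_smul,
    smul_smul, ENNReal.div_eq_inv_mul]

lemma my_pppLaw_univ {E : Type*} [MeasurableSpace E] (ρ : Measure E) [IsFiniteMeasure ρ]
    {f : E → ℝ≥0∞} (hf : Measurable f) [IsFiniteMeasure (ρ.withDensity f)] :
    pppLaw (ρ.withDensity f) Set.univ = 1 := by
  haveI := my_pppBase_finite ρ
  have hmass : (ρ.withDensity f) Set.univ = ∫⁻ y, f y ∂ρ := by
    rw [withDensity_apply _ MeasurableSet.univ, Measure.restrict_univ]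
  have hfin : ∫⁻ y, f y ∂ρ ≠ ∞ := by rw [← hmass]; exact measure_ne_top _ _
  have hGn : ∀ n : ℕ, Measurable fun x : Fin n → E => ∏ i, f (x i) := fun n =>
    Finset.measurable_prod _ fun i _ => hf.comp (measurable_pi_apply i)
  have hprod : Measurable fun p : (n : ℕ) × (Fin n → E) => ∏ i, f (p.2 i) :=
    my_measurable_sigma fun n => hGn n
  rw [my_pppLaw_eq ρ hf, withDensity_apply _ MeasurableSet.univ, Measure.restrict_univ,
    lintegral_const_mul _ hprod,
    my_lintegral_pppBase ρ hf hfin, ← hmass, ← ENNReal.ofReal_mul (Real.exp_nonneg _),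
    ← Real.exp_add, neg_add_cancel, Real.exp_zero, ENNReal.ofReal_one]

end PPP

section Hellinger
open scoped ENNReal
open Set MeasureTheory

lemma my_hellingerSq_withDensity {Ω : Type*} [MeasurableSpace Ω] (R : Measure Ω)
    [IsFiniteMeasure R] {f g : Ω → ℝ≥0∞} (hf : Measurable f) (hg : Measurable g)
    (hf' : ∀ ω, f ω ≠ ∞) (hg' : ∀ ω, g ω ≠ ∞)
    [IsFiniteMeasure (R.withDensity f)] [IsFiniteMeasure (R.withDensity g)] :
    hellingerSq (R.withDensity f) (R.withDensity g)
      = ((R.withDensity f) Set.univ).toReal + ((R.withDensity g) Set.univ).toReal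
        - 2 * (∫⁻ ω, ENNReal.ofReal
            (Real.sqrt (f ω).toReal * Real.sqrt (g ω).toReal) ∂ R).toReal := by
  set P := R.withDensity f with hP
  set Q := R.withDensity g with hQ
  have hσ : P + Q = R.withDensity (fun ω => f ω + g ω) := by
    rw [hP, hQ, ← withDensity_add_right _ hg]; rfl
  set h₁ : Ω → ℝ≥0∞ := fun ω => f ω / (f ω + g ω) with hh₁
  set h₂ : Ω → ℝ≥0∞ := fun ω => g ω / (f ω + g ω) with hh₂
  have hm₁ : Measurable h₁ := hf.div (hf.add hg)
  have hm₂ : Measurable h₂ := hg.div (hf.add hg)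
  have hkey : ∀ (u v : Ω → ℝ≥0∞), Measurable u → Measurable v → (∀ ω, u ω ≠ ∞) →
      (∀ ω, v ω ≠ ∞) →
      (R.withDensity fun ω => u ω + v ω).withDensity (fun ω => u ω / (u ω + v ω))
        = R.withDensity u := by
    intro u v hu hv hu' hv'
    rw [show (fun ω => u ω + v ω) = u + v from rfl, show (fun ω => u ω / (u ω + v ω)) = u / (u + v) from rfl,
      ← withDensity_mul R (hu.add hv) (hu.div (hu.add hv))]
    refine withDensity_congr_ae (Filter.Eventually.of_forall fun ω => ?_)
    by_cases h0 : u ω + v ω = 0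
    · have hu0 : u ω = 0 := by
        rcases add_eq_zero.mp h0 with ⟨h, -⟩; exact h
      simp [h0, hu0]
    · have hfin : u ω + v ω ≠ ∞ := ENNReal.add_ne_top.mpr ⟨hu' ω, hv' ω⟩
      simp only [Pi.mul_apply, Pi.add_apply, Pi.div_apply, Pi.inv_apply, div_eq_mul_inv]
      rw [mul_comm (u ω), ← mul_assoc, ENNReal.mul_inv_cancel h0 hfin, one_mul]
  have hPσ : (P + Q).withDensity h₁ = P := by rw [hσ]; exact hkey f g hf hg hf' hg'
  have hQσ : (P + Q).withDensity h₂ = Q := by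
    have h2' : h₂ = fun ω => g ω / (g ω + f ω) := funext fun ω => by
      rw [hh₂]; simp only; rw [add_comm]
    rw [hσ, h2', show (fun ω => f ω + g ω) = (fun ω => g ω + f ω) from
      funext fun ω => add_comm _ _]
    exact hkey g f hg hf hg' hf' 
  haveI : IsFiniteMeasure (P + Q) := by infer_instance
  have hrn₁ : P.rnDeriv (P + Q) =ᵐ[P + Q] h₁ :=
    (Measure.eq_rnDeriv hm₁ Measure.MutuallySingular.zero_left (by rw [zero_add, hPσ])).symm
  have hrn₂ : Q.rnDeriv (P + Q) =ᵐ[P + Q] h₂ :=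
    (Measure.eq_rnDeriv hm₂ Measure.MutuallySingular.zero_left (by rw [zero_add, hQσ])).symm
  have hle₁ : ∀ ω, h₁ ω ≤ 1 := fun ω => ENNReal.div_le_of_le_mul (by simp)
  have hle₂ : ∀ ω, h₂ ω ≤ 1 := fun ω => ENNReal.div_le_of_le_mul (by simp)
  have htr₁ : ∀ ω, (h₁ ω).toReal ≤ 1 := fun ω =>
    ENNReal.toReal_le_of_le_ofReal one_pos.le (by simpa using hle₁ ω)
  have htr₂ : ∀ ω, (h₂ ω).toReal ≤ 1 := fun ω =>
    ENNReal.toReal_le_of_le_ofReal one_pos.le (by simpa using hle₂ ω)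
  -- rewrite the Hellinger integrand
  have step1 : hellingerSq P Q = ∫ ω, (Real.sqrt (h₁ ω).toReal - Real.sqrt (h₂ ω).toReal) ^ 2
      ∂(P + Q) := by
    unfold hellingerSq
    refine integral_congr_ae ?_
    filter_upwards [hrn₁, hrn₂] with ω e₁ e₂
    rw [e₁, e₂]
  have hsq : ∀ ω, (Real.sqrt (h₁ ω).toReal - Real.sqrt (h₂ ω).toReal) ^ 2
      = (h₁ ω).toReal + (h₂ ω).toReal
        - 2 * (Real.sqrt (h₁ ω).toReal * Real.sqrt (h₂ ω).toReal) := by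
    intro ω
    rw [sub_sq, Real.sq_sqrt ENNReal.toReal_nonneg, Real.sq_sqrt ENNReal.toReal_nonneg]
    ring
  -- integrability
  have hint : ∀ (u : Ω → ℝ), Measurable u → (∀ ω, 0 ≤ u ω) → (∀ ω, u ω ≤ 1) →
      Integrable u (P + Q) := by
    intro u hu h0 h1
    refine Integrable.mono' (integrable_const 1) hu.aestronglyMeasurable ?_
    exact Filter.Eventually.of_forall fun ω => by
      rw [Real.norm_eq_abs, abs_of_nonneg (h0 ω)]; exact h1 ω
  have hi₁ : Integrable (fun ω => (h₁ ω).toReal) (P + Q) :=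
    hint _ hm₁.ennreal_toReal (fun ω => ENNReal.toReal_nonneg) htr₁
  have hi₂ : Integrable (fun ω => (h₂ ω).toReal) (P + Q) :=
    hint _ hm₂.ennreal_toReal (fun ω => ENNReal.toReal_nonneg) htr₂
  have hi₃ : Integrable (fun ω => Real.sqrt (h₁ ω).toReal * Real.sqrt (h₂ ω).toReal) (P + Q) :=
    hint _ (hm₁.ennreal_toReal.sqrt.mul hm₂.ennreal_toReal.sqrt)
      (fun ω => mul_nonneg (Real.sqrt_nonneg _) (Real.sqrt_nonneg _))
      (fun ω => mul_le_one₀ (Real.sqrt_le_one.mpr (htr₁ ω)) (Real.sqrt_nonneg _)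
        (Real.sqrt_le_one.mpr (htr₂ ω)))
  have step2 : ∫ ω, (Real.sqrt (h₁ ω).toReal - Real.sqrt (h₂ ω).toReal) ^ 2 ∂(P + Q)
      = (∫ ω, (h₁ ω).toReal ∂(P + Q)) + (∫ ω, (h₂ ω).toReal ∂(P + Q))
        - 2 * ∫ ω, Real.sqrt (h₁ ω).toReal * Real.sqrt (h₂ ω).toReal ∂(P + Q) := by
    simp_rw [hsq]
    have hi12 : Integrable (fun ω => (h₁ ω).toReal + (h₂ ω).toReal) (P + Q) := hi₁.add hi₂
    rw [integral_sub hi12 (hi₃.const_mul 2), integral_add hi₁ hi₂, MeasureTheory.integral_const_mul]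
  -- the two mass integrals
  have hmass₁ : ∫ ω, (h₁ ω).toReal ∂(P + Q) = (P Set.univ).toReal := by
    have hae : (fun ω => (h₁ ω).toReal) =ᵐ[P + Q] fun ω => (P.rnDeriv (P + Q) ω).toReal := by
      filter_upwards [hrn₁] with ω e using by rw [e]
    rw [integral_congr_ae hae, Measure.integral_toReal_rnDeriv
      (Measure.absolutelyContinuous_of_le (Measure.le_add_right le_rfl)), measureReal_def]
  have hmass₂ : ∫ ω, (h₂ ω).toReal ∂(P + Q) = (Q Set.univ).toReal := by
    have hae : (fun ω => (h₂ ω).toReal) =ᵐ[P + Q] fun ω => (Q.rnDeriv (P + Q) ω).toReal := by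
      filter_upwards [hrn₂] with ω e using by rw [e]
    rw [integral_congr_ae hae, Measure.integral_toReal_rnDeriv
      (Measure.absolutelyContinuous_of_le (Measure.le_add_left le_rfl)), measureReal_def]
  -- the cross term
  have hcross : ∫ ω, Real.sqrt (h₁ ω).toReal * Real.sqrt (h₂ ω).toReal ∂(P + Q)
      = (∫⁻ ω, ENNReal.ofReal (Real.sqrt (f ω).toReal * Real.sqrt (g ω).toReal) ∂ R).toReal := by
    rw [integral_eq_lintegral_of_nonneg_ae
      (Filter.Eventually.of_forall fun ω =>
        mul_nonneg (Real.sqrt_nonneg _) (Real.sqrt_nonneg _))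
      (hm₁.ennreal_toReal.sqrt.mul hm₂.ennreal_toReal.sqrt).aestronglyMeasurable]
    congr 1
    rw [hσ, show (fun ω => f ω + g ω) = f + g from rfl]
    refine (lintegral_withDensity_eq_lintegral_mul R (hf.add hg)
      ((hm₁.ennreal_toReal.sqrt.mul hm₂.ennreal_toReal.sqrt).ennreal_ofReal)).trans ?_
    refine lintegral_congr fun ω => ?_
    simp only [Pi.mul_apply, Pi.add_apply]
    set a := (f ω).toReal with ha
    set b := (g ω).toReal with hb
    have ha0 : 0 ≤ a := ENNReal.toReal_nonneg
    have hb0 : 0 ≤ b := ENNReal.toReal_nonneg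
    have hfa : f ω = ENNReal.ofReal a := (ENNReal.ofReal_toReal (hf' ω)).symm
    have hgb : g ω = ENNReal.ofReal b := (ENNReal.ofReal_toReal (hg' ω)).symm
    rcases eq_or_lt_of_le (by positivity : (0:ℝ) ≤ a + b) with hs0 | hs
    · have ha' : a = 0 := by linarith [ha0, hb0]
      have hb' : b = 0 := by linarith [ha0, hb0]
      simp [hh₁, hh₂, hfa, hgb, ha', hb']
    · have hsum : f ω + g ω = ENNReal.ofReal (a + b) := by
        rw [hfa, hgb, ENNReal.ofReal_add ha0 hb0]
      have hdiv₁ : h₁ ω = ENNReal.ofReal (a / (a + b)) := by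
        rw [hh₁]; simp only
        rw [hsum, hfa, ENNReal.ofReal_div_of_pos hs]
      have hdiv₂ : h₂ ω = ENNReal.ofReal (b / (a + b)) := by
        rw [hh₂]; simp only
        rw [hsum, hgb, ENNReal.ofReal_div_of_pos hs]
      rw [hdiv₁, hdiv₂, hsum, ENNReal.toReal_ofReal (by positivity),
        ENNReal.toReal_ofReal (by positivity), ← ENNReal.ofReal_mul hs.le]
      congr 1
      rw [Real.sqrt_div ha0, Real.sqrt_div hb0, div_mul_div_comm,
        Real.mul_self_sqrt hs.le, mul_comm, div_mul_cancel₀ _ hs.ne']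
  rw [step1, step2, hmass₁, hmass₂, hcross]

end Hellinger

section Band
open scoped ENNReal
open Set MeasureTheory

/-- Density of a band-type intensity. -/
noncomputable def bandFn (fD : ℝ → ℝ) (a b : ℝ → ℝ) (c c' : ℝ) : ℝ × ℝ → ℝ≥0∞ :=
  fun z => ENNReal.ofReal (Set.indicator
    {z : ℝ × ℝ | z.1 ∈ Icc (0:ℝ) 1 ∧ z.2 ∈ Icc (a z.1) (b z.1)}
    (fun z => fD z.1 * c * c') z)

lemma my_measurableSet_band {a b : ℝ → ℝ} (ham : Measurable a) (hbm : Measurable b) :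
    MeasurableSet {z : ℝ × ℝ | z.1 ∈ Icc (0:ℝ) 1 ∧ z.2 ∈ Icc (a z.1) (b z.1)} := by
  have h : {z : ℝ × ℝ | z.1 ∈ Icc (0:ℝ) 1 ∧ z.2 ∈ Icc (a z.1) (b z.1)}
      = (Prod.fst ⁻¹' Icc (0:ℝ) 1) ∩ ({z : ℝ × ℝ | a z.1 ≤ z.2} ∩ {z : ℝ × ℝ | z.2 ≤ b z.1}) := by
    ext z; simp [mem_Icc, and_assoc]
  rw [h]
  exact (measurable_fst measurableSet_Icc).inter
    ((measurableSet_le (ham.comp measurable_fst) measurable_snd).inter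
      (measurableSet_le measurable_snd (hbm.comp measurable_fst)))

lemma bandFn_measurable {fD : ℝ → ℝ} (hfDm : Measurable fD) {a b : ℝ → ℝ}
    (ham : Measurable a) (hbm : Measurable b) (c c' : ℝ) :
    Measurable (bandFn fD a b c c') :=
  ((((hfDm.comp measurable_fst).mul_const c).mul_const c').indicator
    (my_measurableSet_band ham hbm)).ennreal_ofReal

lemma bandFn_ne_top (fD : ℝ → ℝ) (a b : ℝ → ℝ) (c c' : ℝ) (z : ℝ × ℝ) :
    bandFn fD a b c c' z ≠ ∞ := ENNReal.ofReal_ne_top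

lemma bandFn_restrict {C : ℝ} {fD : ℝ → ℝ} {a b : ℝ → ℝ}
    (ha : ∀ x, -C - 1 ≤ a x) (hb : ∀ x, b x ≤ C + 1) (c c' : ℝ) :
    volume.withDensity (bandFn fD a b c c')
      = (volume.restrict (Icc (0:ℝ) 1 ×ˢ Icc (-C - 1) (C + 1))).withDensity
          (bandFn fD a b c c') := by
  have heq : bandFn fD a b c c'
      = (Icc (0:ℝ) 1 ×ˢ Icc (-C - 1) (C + 1)).indicator (bandFn fD a b c c') := by
    funext z
    by_cases hz : z ∈ Icc (0:ℝ) 1 ×ˢ Icc (-C - 1) (C + 1)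
    · rw [indicator_of_mem hz]
    · rw [indicator_of_notMem hz]
      have hzS : z ∉ {z : ℝ × ℝ | z.1 ∈ Icc (0:ℝ) 1 ∧ z.2 ∈ Icc (a z.1) (b z.1)} := by
        intro hzS
        exact hz ⟨hzS.1, ⟨le_trans (ha z.1) hzS.2.1, le_trans hzS.2.2 (hb z.1)⟩⟩
      rw [bandFn, indicator_of_notMem hzS, ENNReal.ofReal_zero]
  conv_lhs => rw [heq]
  rw [withDensity_indicator (measurableSet_Icc.prod measurableSet_Icc)]

lemma my_integrableOn {w : ℝ → ℝ} (hw : Measurable w) {K : ℝ} (hK : ∀ x, |w x| ≤ K) :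
    IntegrableOn w (Icc (0:ℝ) 1) volume := by
  refine Measure.integrableOn_of_bounded (M := K) ?_ hw.aestronglyMeasurable
    (Filter.Eventually.of_forall fun x => by rw [Real.norm_eq_abs]; exact hK x)
  rw [Real.volume_Icc]; exact ENNReal.ofReal_ne_top

lemma bandFn_lintegral {fD : ℝ → ℝ} (hfDm : Measurable fD) (hfD0 : ∀ x, 0 ≤ fD x)
    {M : ℝ} (hfDbd : ∀ x, fD x ≤ M)
    {a b : ℝ → ℝ} (ham : Measurable a) (hbm : Measurable b) (hab : ∀ x, a x ≤ b x)
    {K : ℝ} (hK : ∀ x, b x - a x ≤ K)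
    {c c' : ℝ} (hc : 0 ≤ c) (hc' : 0 ≤ c') :
    ∫⁻ z, bandFn fD a b c c' z ∂(volume : Measure (ℝ × ℝ))
      = ENNReal.ofReal (∫ x in Icc (0:ℝ) 1, fD x * c * c' * (b x - a x)) := by
  have hM0 : 0 ≤ M := le_trans (hfD0 0) (hfDbd 0)
  have hK0 : 0 ≤ K := le_trans (by linarith [hab 0]) (hK 0)
  have hmeas := bandFn_measurable hfDm ham hbm c c'
  rw [Measure.volume_eq_prod, lintegral_prod _ hmeas.aemeasurable]
  have hinner : ∀ x : ℝ, (∫⁻ y, bandFn fD a b c c' (x, y) ∂volume)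
      = (Icc (0:ℝ) 1).indicator
          (fun x => ENNReal.ofReal (fD x * c * c' * (b x - a x))) x := by
    intro x
    by_cases hx : x ∈ Icc (0:ℝ) 1
    · have heq : (fun y => bandFn fD a b c c' (x, y))
          = fun y => (Icc (a x) (b x)).indicator
              (fun _ => ENNReal.ofReal (fD x * c * c')) y := by
        funext y
        by_cases hy : y ∈ Icc (a x) (b x)
        · rw [indicator_of_mem hy, bandFn,
            indicator_of_mem (show ((x,y) : ℝ × ℝ) ∈ {z : ℝ × ℝ | z.1 ∈ Icc (0:ℝ) 1 ∧ z.2 ∈ Icc (a z.1) (b z.1)} from ⟨hx, hy⟩)]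
        · rw [indicator_of_notMem hy, bandFn,
            indicator_of_notMem (fun hmem => hy hmem.2), ENNReal.ofReal_zero]
      rw [heq, lintegral_indicator measurableSet_Icc, setLIntegral_const, Real.volume_Icc,
        ← ENNReal.ofReal_mul (mul_nonneg (mul_nonneg (hfD0 x) hc) hc'), indicator_of_mem hx]
    · have heq : (fun y => bandFn fD a b c c' (x, y)) = fun _ => (0 : ℝ≥0∞) := by
        funext y
        rw [bandFn, indicator_of_notMem (fun hmem => hx hmem.1), ENNReal.ofReal_zero]
      rw [heq, lintegral_const, zero_mul, indicator_of_notMem hx]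
  simp_rw [hinner]
  rw [lintegral_indicator measurableSet_Icc]
  have hint : IntegrableOn (fun x => fD x * c * c' * (b x - a x)) (Icc (0:ℝ) 1) volume := by
    refine my_integrableOn (((hfDm.mul_const c).mul_const c').mul (hbm.sub ham))
      (K := M * c * c' * K) fun x => ?_
    have h1 : 0 ≤ fD x * c * c' := mul_nonneg (mul_nonneg (hfD0 x) hc) hc'
    have h2 : 0 ≤ b x - a x := sub_nonneg.mpr (hab x)
    rw [abs_of_nonneg (mul_nonneg h1 h2)]
    exact mul_le_mul (mul_le_mul_of_nonneg_right
        (mul_le_mul_of_nonneg_right (hfDbd x) hc) hc') (hK x) h2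
      (mul_nonneg (mul_nonneg hM0 hc) hc')
  rw [← ofReal_integral_eq_lintegral_ofReal hint (Filter.Eventually.of_forall fun x =>
    mul_nonneg (mul_nonneg (mul_nonneg (hfD0 x) hc) hc') (sub_nonneg.mpr (hab x)))]

lemma bandFn_cross_min {fD : ℝ → ℝ} (hfD0 : ∀ x, 0 ≤ fD x) (a b₁ b₂ : ℝ → ℝ)
    {c c' : ℝ} (hc : 0 ≤ c) (hc' : 0 ≤ c') :
    (fun z => ENNReal.ofReal (Real.sqrt ((bandFn fD a b₁ c c' z).toReal)
        * Real.sqrt ((bandFn fD a b₂ c c' z).toReal)))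
      = bandFn fD a (fun x => min (b₁ x) (b₂ x)) c c' := by
  funext z
  have hnn : 0 ≤ fD z.1 * c * c' := mul_nonneg (mul_nonneg (hfD0 z.1) hc) hc'
  by_cases h1 : z ∈ {z : ℝ × ℝ | z.1 ∈ Icc (0:ℝ) 1 ∧ z.2 ∈ Icc (a z.1) (b₁ z.1)}
  · by_cases h2 : z ∈ {z : ℝ × ℝ | z.1 ∈ Icc (0:ℝ) 1 ∧ z.2 ∈ Icc (a z.1) (b₂ z.1)}
    · have hmin : z ∈ {z : ℝ × ℝ | z.1 ∈ Icc (0:ℝ) 1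
          ∧ z.2 ∈ Icc (a z.1) ((fun x => min (b₁ x) (b₂ x)) z.1)} :=
        ⟨h1.1, h1.2.1, le_min h1.2.2 h2.2.2⟩
      rw [bandFn, bandFn, bandFn, indicator_of_mem h1, indicator_of_mem h2,
        indicator_of_mem hmin, ENNReal.toReal_ofReal hnn, Real.mul_self_sqrt hnn]
    · have hmin : z ∉ {z : ℝ × ℝ | z.1 ∈ Icc (0:ℝ) 1
          ∧ z.2 ∈ Icc (a z.1) ((fun x => min (b₁ x) (b₂ x)) z.1)} := by
        intro hmem
        exact h2 ⟨hmem.1, hmem.2.1, le_trans hmem.2.2 (min_le_right _ _)⟩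
      rw [bandFn, bandFn, bandFn, indicator_of_notMem h2, indicator_of_notMem hmin]
      simp
  · have hmin : z ∉ {z : ℝ × ℝ | z.1 ∈ Icc (0:ℝ) 1
        ∧ z.2 ∈ Icc (a z.1) ((fun x => min (b₁ x) (b₂ x)) z.1)} := by
      intro hmem
      exact h1 ⟨hmem.1, hmem.2.1, le_trans hmem.2.2 (min_le_left _ _)⟩
    rw [bandFn, bandFn, bandFn, indicator_of_notMem h1, indicator_of_notMem hmin]
    simp

lemma bandFn_cross_max {fD : ℝ → ℝ} (hfD0 : ∀ x, 0 ≤ fD x) (a₁ a₂ b : ℝ → ℝ)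
    {c c' : ℝ} (hc : 0 ≤ c) (hc' : 0 ≤ c') :
    (fun z => ENNReal.ofReal (Real.sqrt ((bandFn fD a₁ b c c' z).toReal)
        * Real.sqrt ((bandFn fD a₂ b c c' z).toReal)))
      = bandFn fD (fun x => max (a₁ x) (a₂ x)) b c c' := by
  funext z
  have hnn : 0 ≤ fD z.1 * c * c' := mul_nonneg (mul_nonneg (hfD0 z.1) hc) hc'
  by_cases h1 : z ∈ {z : ℝ × ℝ | z.1 ∈ Icc (0:ℝ) 1 ∧ z.2 ∈ Icc (a₁ z.1) (b z.1)}
  · by_cases h2 : z ∈ {z : ℝ × ℝ | z.1 ∈ Icc (0:ℝ) 1 ∧ z.2 ∈ Icc (a₂ z.1) (b z.1)}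
    · have hmax : z ∈ {z : ℝ × ℝ | z.1 ∈ Icc (0:ℝ) 1
          ∧ z.2 ∈ Icc ((fun x => max (a₁ x) (a₂ x)) z.1) (b z.1)} :=
        ⟨h1.1, max_le h1.2.1 h2.2.1, h1.2.2⟩
      rw [bandFn, bandFn, bandFn, indicator_of_mem h1, indicator_of_mem h2,
        indicator_of_mem hmax, ENNReal.toReal_ofReal hnn, Real.mul_self_sqrt hnn]
    · have hmax : z ∉ {z : ℝ × ℝ | z.1 ∈ Icc (0:ℝ) 1
          ∧ z.2 ∈ Icc ((fun x => max (a₁ x) (a₂ x)) z.1) (b z.1)} := by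
        intro hmem
        exact h2 ⟨hmem.1, le_trans (le_max_right _ _) hmem.2.1, hmem.2.2⟩
      rw [bandFn, bandFn, bandFn, indicator_of_notMem h2, indicator_of_notMem hmax]
      simp
  · have hmax : z ∉ {z : ℝ × ℝ | z.1 ∈ Icc (0:ℝ) 1
        ∧ z.2 ∈ Icc ((fun x => max (a₁ x) (a₂ x)) z.1) (b z.1)} := by
      intro hmem
      exact h1 ⟨hmem.1, le_trans (le_max_left _ _) hmem.2.1, hmem.2.2⟩
    rw [bandFn, bandFn, bandFn, indicator_of_notMem h1, indicator_of_notMem hmax]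
    simp

lemma my_sqrt_prod {ι : Type*} (s : Finset ι) (f : ι → ℝ) (hf : ∀ i, 0 ≤ f i) :
    Real.sqrt (∏ i ∈ s, f i) = ∏ i ∈ s, Real.sqrt (f i) := by
  classical
  induction s using Finset.induction_on with
  | empty => simp
  | insert _ _ h ih => rw [Finset.prod_insert h, Finset.prod_insert h, Real.sqrt_mul (hf _), ih]

lemma my_sqrt_exp (x : ℝ) : Real.sqrt (Real.exp x) = Real.exp (x / 2) := by
  have h : Real.exp (x/2) * Real.exp (x/2) = Real.exp x := by
    rw [← Real.exp_add]; ring_nf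
  rw [← h, Real.sqrt_mul_self (Real.exp_nonneg _)]

lemma my_bc_factor {E : Type*} [MeasurableSpace E] (c₁ c₂ : ℝ≥0∞)
    (l₁ l₂ : E → ℝ≥0∞) (p : (n : ℕ) × (Fin n → E)) :
    ENNReal.ofReal (Real.sqrt ((c₁ * ∏ i, l₁ (p.2 i)).toReal)
        * Real.sqrt ((c₂ * ∏ i, l₂ (p.2 i)).toReal))
      = ENNReal.ofReal (Real.sqrt (c₁.toReal * c₂.toReal))
        * ∏ i, ENNReal.ofReal
            (Real.sqrt ((l₁ (p.2 i)).toReal) * Real.sqrt ((l₂ (p.2 i)).toReal)) := by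
  have h1 : ((c₁ * ∏ i, l₁ (p.2 i)).toReal) = c₁.toReal * ∏ i, (l₁ (p.2 i)).toReal := by
    rw [ENNReal.toReal_mul, ENNReal.toReal_prod]
  have h2 : ((c₂ * ∏ i, l₂ (p.2 i)).toReal) = c₂.toReal * ∏ i, (l₂ (p.2 i)).toReal := by
    rw [ENNReal.toReal_mul, ENNReal.toReal_prod]
  rw [h1, h2, Real.sqrt_mul ENNReal.toReal_nonneg, Real.sqrt_mul ENNReal.toReal_nonneg,
    my_sqrt_prod _ _ (fun i => ENNReal.toReal_nonneg),
    my_sqrt_prod _ _ (fun i => ENNReal.toReal_nonneg),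
    Real.sqrt_mul ENNReal.toReal_nonneg,
    ← ENNReal.ofReal_prod_of_nonneg
      (fun i _ => mul_nonneg (Real.sqrt_nonneg _) (Real.sqrt_nonneg _)),
    ← ENNReal.ofReal_mul (mul_nonneg (Real.sqrt_nonneg _) (Real.sqrt_nonneg _))]
  congr 1
  rw [Finset.prod_mul_distrib]
  ring

lemma my_minmax (y z : ℝ) :
    min y z - (y + z)/2 = -(|y - z|)/2 ∧ (y + z)/2 - max y z = -(|y - z|)/2 := by
  rcases le_total y z with h | h
  · rw [min_eq_left h, max_eq_right h, abs_of_nonpos (by linarith : y - z ≤ 0)]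
    constructor <;> ring
  · rw [min_eq_right h, max_eq_left h, abs_of_nonneg (by linarith : (0:ℝ) ≤ y - z)]
    constructor <;> ring

end Band

section Master
open scoped ENNReal
open Set MeasureTheory

lemma my_hellinger_ppp {E : Type*} [MeasurableSpace E] (ρ : Measure E) [IsFiniteMeasure ρ]
    (l₁ l₂ u₁ u₂ : E → ℝ≥0∞)
    (hl₁m : Measurable l₁) (hl₂m : Measurable l₂) (hu₁m : Measurable u₁) (hu₂m : Measurable u₂)
    (hl₁' : ∀ z, l₁ z ≠ ∞) (hl₂' : ∀ z, l₂ z ≠ ∞) (hu₁' : ∀ z, u₁ z ≠ ∞) (hu₂' : ∀ z, u₂ z ≠ ∞)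
    (A₁ A₂ AL B₁ B₂ BU : ℝ)
    (hA₁ : ∫⁻ z, l₁ z ∂ρ = ENNReal.ofReal A₁) (hA₁0 : 0 ≤ A₁)
    (hA₂ : ∫⁻ z, l₂ z ∂ρ = ENNReal.ofReal A₂) (hA₂0 : 0 ≤ A₂)
    (hB₁ : ∫⁻ z, u₁ z ∂ρ = ENNReal.ofReal B₁) (hB₁0 : 0 ≤ B₁)
    (hB₂ : ∫⁻ z, u₂ z ∂ρ = ENNReal.ofReal B₂) (hB₂0 : 0 ≤ B₂)
    (hAL : ∫⁻ z, ENNReal.ofReal (Real.sqrt ((l₁ z).toReal) * Real.sqrt ((l₂ z).toReal)) ∂ρ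
      = ENNReal.ofReal AL) (hAL0 : 0 ≤ AL)
    (hBU : ∫⁻ z, ENNReal.ofReal (Real.sqrt ((u₁ z).toReal) * Real.sqrt ((u₂ z).toReal)) ∂ρ
      = ENNReal.ofReal BU) (hBU0 : 0 ≤ BU)
    [SigmaFinite (ρ.withDensity l₁)] [SigmaFinite (ρ.withDensity l₂)]
    [SigmaFinite (ρ.withDensity u₁)] [SigmaFinite (ρ.withDensity u₂)] :
    hellingerSq ((pppLaw (ρ.withDensity l₁)).prod (pppLaw (ρ.withDensity u₁)))
        ((pppLaw (ρ.withDensity l₂)).prod (pppLaw (ρ.withDensity u₂)))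
      = 2 - 2 * Real.exp ((AL - (A₁ + A₂)/2) + (BU - (B₁ + B₂)/2)) := by
  haveI hIρ : IsFiniteMeasure (pppBase ρ) := my_pppBase_finite ρ
  have hmass : ∀ (l : E → ℝ≥0∞) (A : ℝ), (∫⁻ z, l z ∂ρ = ENNReal.ofReal A) →
      (ρ.withDensity l) Set.univ = ENNReal.ofReal A := by
    intro l A hA
    rw [withDensity_apply _ MeasurableSet.univ, Measure.restrict_univ, hA]
  haveI hIl₁ : IsFiniteMeasure (ρ.withDensity l₁) :=
    ⟨by rw [hmass l₁ A₁ hA₁]; exact ENNReal.ofReal_lt_top⟩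
  haveI hIl₂ : IsFiniteMeasure (ρ.withDensity l₂) :=
    ⟨by rw [hmass l₂ A₂ hA₂]; exact ENNReal.ofReal_lt_top⟩
  haveI hIu₁ : IsFiniteMeasure (ρ.withDensity u₁) :=
    ⟨by rw [hmass u₁ B₁ hB₁]; exact ENNReal.ofReal_lt_top⟩
  haveI hIu₂ : IsFiniteMeasure (ρ.withDensity u₂) :=
    ⟨by rw [hmass u₂ B₂ hB₂]; exact ENNReal.ofReal_lt_top⟩
  set c₁ : ℝ≥0∞ := ENNReal.ofReal (Real.exp (-((ρ.withDensity l₁) Set.univ).toReal)) with hc₁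
  set c₂ : ℝ≥0∞ := ENNReal.ofReal (Real.exp (-((ρ.withDensity l₂) Set.univ).toReal)) with hc₂
  set d₁ : ℝ≥0∞ := ENNReal.ofReal (Real.exp (-((ρ.withDensity u₁) Set.univ).toReal)) with hd₁
  set d₂ : ℝ≥0∞ := ENNReal.ofReal (Real.exp (-((ρ.withDensity u₂) Set.univ).toReal)) with hd₂
  have hc₁v : c₁.toReal = Real.exp (-A₁) := by
    rw [hc₁, hmass l₁ A₁ hA₁, ENNReal.toReal_ofReal hA₁0,
      ENNReal.toReal_ofReal (Real.exp_nonneg _)]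
  have hc₂v : c₂.toReal = Real.exp (-A₂) := by
    rw [hc₂, hmass l₂ A₂ hA₂, ENNReal.toReal_ofReal hA₂0,
      ENNReal.toReal_ofReal (Real.exp_nonneg _)]
  have hd₁v : d₁.toReal = Real.exp (-B₁) := by
    rw [hd₁, hmass u₁ B₁ hB₁, ENNReal.toReal_ofReal hB₁0,
      ENNReal.toReal_ofReal (Real.exp_nonneg _)]
  have hd₂v : d₂.toReal = Real.exp (-B₂) := by
    rw [hd₂, hmass u₂ B₂ hB₂, ENNReal.toReal_ofReal hB₂0,
      ENNReal.toReal_ofReal (Real.exp_nonneg _)]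
  set F₁ : ((k : ℕ) × (Fin k → E)) → ℝ≥0∞ := fun p => c₁ * ∏ i, l₁ (p.2 i) with hF₁
  set F₂ : ((k : ℕ) × (Fin k → E)) → ℝ≥0∞ := fun p => c₂ * ∏ i, l₂ (p.2 i) with hF₂
  set G₁ : ((k : ℕ) × (Fin k → E)) → ℝ≥0∞ := fun p => d₁ * ∏ i, u₁ (p.2 i) with hG₁
  set G₂ : ((k : ℕ) × (Fin k → E)) → ℝ≥0∞ := fun p => d₂ * ∏ i, u₂ (p.2 i) with hG₂
  clear_value c₁ c₂ d₁ d₂ F₁ F₂ G₁ G₂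
  have hprodm : ∀ (l : E → ℝ≥0∞), Measurable l →
      Measurable fun p : (k : ℕ) × (Fin k → E) => ∏ i, l (p.2 i) := by
    intro l hl
    refine my_measurable_sigma fun k => ?_
    have h : Measurable fun x : Fin k → E => ∏ i, l (x i) :=
      Finset.measurable_prod _ fun i _ => hl.comp (measurable_pi_apply i)
    exact h
  have hF₁m : Measurable F₁ := by rw [hF₁]; exact (hprodm l₁ hl₁m).const_mul c₁
  have hF₂m : Measurable F₂ := by rw [hF₂]; exact (hprodm l₂ hl₂m).const_mul c₂
  have hG₁m : Measurable G₁ := by rw [hG₁]; exact (hprodm u₁ hu₁m).const_mul d₁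
  have hG₂m : Measurable G₂ := by rw [hG₂]; exact (hprodm u₂ hu₂m).const_mul d₂
  have hF₁' : ∀ p, F₁ p ≠ ∞ := fun p => by
    rw [hF₁, hc₁]
    exact ENNReal.mul_ne_top ENNReal.ofReal_ne_top (ENNReal.prod_ne_top fun i _ => hl₁' _)
  have hF₂' : ∀ p, F₂ p ≠ ∞ := fun p => by
    rw [hF₂, hc₂]
    exact ENNReal.mul_ne_top ENNReal.ofReal_ne_top (ENNReal.prod_ne_top fun i _ => hl₂' _)
  have hG₁' : ∀ p, G₁ p ≠ ∞ := fun p => by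
    rw [hG₁, hd₁]
    exact ENNReal.mul_ne_top ENNReal.ofReal_ne_top (ENNReal.prod_ne_top fun i _ => hu₁' _)
  have hG₂' : ∀ p, G₂ p ≠ ∞ := fun p => by
    rw [hG₂, hd₂]
    exact ENNReal.mul_ne_top ENNReal.ofReal_ne_top (ENNReal.prod_ne_top fun i _ => hu₂' _)
  -- the pppLaw representations
  have hlaw₁ : pppLaw (ρ.withDensity l₁) = (pppBase ρ).withDensity F₁ := by
    rw [my_pppLaw_eq ρ hl₁m, hF₁, hc₁]
  have hlaw₂ : pppLaw (ρ.withDensity l₂) = (pppBase ρ).withDensity F₂ := by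
    rw [my_pppLaw_eq ρ hl₂m, hF₂, hc₂]
  have hlaw₃ : pppLaw (ρ.withDensity u₁) = (pppBase ρ).withDensity G₁ := by
    rw [my_pppLaw_eq ρ hu₁m, hG₁, hd₁]
  have hlaw₄ : pppLaw (ρ.withDensity u₂) = (pppBase ρ).withDensity G₂ := by
    rw [my_pppLaw_eq ρ hu₂m, hG₂, hd₂]
  haveI hIF₁ : IsFiniteMeasure ((pppBase ρ).withDensity F₁) := by
    rw [← hlaw₁]; exact ⟨by rw [my_pppLaw_univ ρ hl₁m]; exact ENNReal.one_lt_top⟩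
  haveI hIF₂ : IsFiniteMeasure ((pppBase ρ).withDensity F₂) := by
    rw [← hlaw₂]; exact ⟨by rw [my_pppLaw_univ ρ hl₂m]; exact ENNReal.one_lt_top⟩
  haveI hIG₁ : IsFiniteMeasure ((pppBase ρ).withDensity G₁) := by
    rw [← hlaw₃]; exact ⟨by rw [my_pppLaw_univ ρ hu₁m]; exact ENNReal.one_lt_top⟩
  haveI hIG₂ : IsFiniteMeasure ((pppBase ρ).withDensity G₂) := by
    rw [← hlaw₄]; exact ⟨by rw [my_pppLaw_univ ρ hu₂m]; exact ENNReal.one_lt_top⟩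
  have hprod₁ : (pppLaw (ρ.withDensity l₁)).prod (pppLaw (ρ.withDensity u₁))
      = ((pppBase ρ).prod (pppBase ρ)).withDensity (fun q => F₁ q.1 * G₁ q.2) := by
    rw [hlaw₁, hlaw₃, my_prod_withDensity (pppBase ρ) (pppBase ρ) hF₁m hG₁m]
  have hprod₂ : (pppLaw (ρ.withDensity l₂)).prod (pppLaw (ρ.withDensity u₂))
      = ((pppBase ρ).prod (pppBase ρ)).withDensity (fun q => F₂ q.1 * G₂ q.2) := by
    rw [hlaw₂, hlaw₄, my_prod_withDensity (pppBase ρ) (pppBase ρ) hF₂m hG₂m]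
  have hf₁₂m : Measurable fun q : ((k : ℕ) × (Fin k → E)) × ((k : ℕ) × (Fin k → E)) =>
      F₁ q.1 * G₁ q.2 := (hF₁m.comp measurable_fst).mul (hG₁m.comp measurable_snd)
  have hf₃₄m : Measurable fun q : ((k : ℕ) × (Fin k → E)) × ((k : ℕ) × (Fin k → E)) =>
      F₂ q.1 * G₂ q.2 := (hF₂m.comp measurable_fst).mul (hG₂m.comp measurable_snd)
  haveI : IsFiniteMeasure (((pppBase ρ).prod (pppBase ρ)).withDensity
      (fun q => F₁ q.1 * G₁ q.2)) := by
    rw [← my_prod_withDensity (pppBase ρ) (pppBase ρ) hF₁m hG₁m]; infer_instance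
  haveI : IsFiniteMeasure (((pppBase ρ).prod (pppBase ρ)).withDensity
      (fun q => F₂ q.1 * G₂ q.2)) := by
    rw [← my_prod_withDensity (pppBase ρ) (pppBase ρ) hF₂m hG₂m]; infer_instance
  rw [hprod₁, hprod₂, my_hellingerSq_withDensity ((pppBase ρ).prod (pppBase ρ)) hf₁₂m hf₃₄m
    (fun q => ENNReal.mul_ne_top (hF₁' q.1) (hG₁' q.2))
    (fun q => ENNReal.mul_ne_top (hF₂' q.1) (hG₂' q.2))]
  -- masses are 1
  have hPmass : (((pppBase ρ).prod (pppBase ρ)).withDensity (fun q => F₁ q.1 * G₁ q.2)) Set.univ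
      = 1 := by
    rw [← my_prod_withDensity (pppBase ρ) (pppBase ρ) hF₁m hG₁m, ← univ_prod_univ,
      Measure.prod_prod, ← hlaw₁, ← hlaw₃, my_pppLaw_univ ρ hl₁m, my_pppLaw_univ ρ hu₁m, mul_one]
  have hQmass : (((pppBase ρ).prod (pppBase ρ)).withDensity (fun q => F₂ q.1 * G₂ q.2)) Set.univ
      = 1 := by
    rw [← my_prod_withDensity (pppBase ρ) (pppBase ρ) hF₂m hG₂m, ← univ_prod_univ,
      Measure.prod_prod, ← hlaw₂, ← hlaw₄, my_pppLaw_univ ρ hl₂m, my_pppLaw_univ ρ hu₂m, mul_one]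
  -- the cross (Bhattacharyya) term
  have hgLm : Measurable fun z =>
      ENNReal.ofReal (Real.sqrt ((l₁ z).toReal) * Real.sqrt ((l₂ z).toReal)) :=
    (hl₁m.ennreal_toReal.sqrt.mul hl₂m.ennreal_toReal.sqrt).ennreal_ofReal
  have hgUm : Measurable fun z =>
      ENNReal.ofReal (Real.sqrt ((u₁ z).toReal) * Real.sqrt ((u₂ z).toReal)) :=
    (hu₁m.ennreal_toReal.sqrt.mul hu₂m.ennreal_toReal.sqrt).ennreal_ofReal
  have hφLm : Measurable fun p : (k : ℕ) × (Fin k → E) =>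
      ENNReal.ofReal (Real.sqrt ((F₁ p).toReal) * Real.sqrt ((F₂ p).toReal)) :=
    (hF₁m.ennreal_toReal.sqrt.mul hF₂m.ennreal_toReal.sqrt).ennreal_ofReal
  have hφUm : Measurable fun p : (k : ℕ) × (Fin k → E) =>
      ENNReal.ofReal (Real.sqrt ((G₁ p).toReal) * Real.sqrt ((G₂ p).toReal)) :=
    (hG₁m.ennreal_toReal.sqrt.mul hG₂m.ennreal_toReal.sqrt).ennreal_ofReal
  have hlower : ∫⁻ p, ENNReal.ofReal (Real.sqrt ((F₁ p).toReal) * Real.sqrt ((F₂ p).toReal))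
      ∂(pppBase ρ) = ENNReal.ofReal (Real.exp (AL - (A₁ + A₂)/2)) := by
    have hpt : (fun p : (k : ℕ) × (Fin k → E) =>
        ENNReal.ofReal (Real.sqrt ((F₁ p).toReal) * Real.sqrt ((F₂ p).toReal)))
        = fun p => ENNReal.ofReal (Real.sqrt (c₁.toReal * c₂.toReal))
          * ∏ i, (fun z => ENNReal.ofReal
              (Real.sqrt ((l₁ z).toReal) * Real.sqrt ((l₂ z).toReal))) (p.2 i) := by
      funext p
      rw [hF₁, hF₂]
      exact my_bc_factor c₁ c₂ l₁ l₂ p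
    rw [hpt, lintegral_const_mul _ (hprodm _ hgLm),
      my_lintegral_pppBase ρ hgLm (by rw [hAL]; exact ENNReal.ofReal_ne_top), hAL,
      ENNReal.toReal_ofReal hAL0, hc₁v, hc₂v, ← Real.exp_add, my_sqrt_exp,
      ← ENNReal.ofReal_mul (Real.exp_nonneg _), ← Real.exp_add,
      show (-A₁ + -A₂)/2 + AL = AL - (A₁ + A₂)/2 from by ring]
  have hupper : ∫⁻ p, ENNReal.ofReal (Real.sqrt ((G₁ p).toReal) * Real.sqrt ((G₂ p).toReal))
      ∂(pppBase ρ) = ENNReal.ofReal (Real.exp (BU - (B₁ + B₂)/2)) := by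
    have hpt : (fun p : (k : ℕ) × (Fin k → E) =>
        ENNReal.ofReal (Real.sqrt ((G₁ p).toReal) * Real.sqrt ((G₂ p).toReal)))
        = fun p => ENNReal.ofReal (Real.sqrt (d₁.toReal * d₂.toReal))
          * ∏ i, (fun z => ENNReal.ofReal
              (Real.sqrt ((u₁ z).toReal) * Real.sqrt ((u₂ z).toReal))) (p.2 i) := by
      funext p
      rw [hG₁, hG₂]
      exact my_bc_factor d₁ d₂ u₁ u₂ p
    rw [hpt, lintegral_const_mul _ (hprodm _ hgUm),
      my_lintegral_pppBase ρ hgUm (by rw [hBU]; exact ENNReal.ofReal_ne_top), hBU,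
      ENNReal.toReal_ofReal hBU0, hd₁v, hd₂v, ← Real.exp_add, my_sqrt_exp,
      ← ENNReal.ofReal_mul (Real.exp_nonneg _), ← Real.exp_add,
      show (-B₁ + -B₂)/2 + BU = BU - (B₁ + B₂)/2 from by ring]
  have hT : ∫⁻ ω, ENNReal.ofReal (Real.sqrt ((F₁ ω.1 * G₁ ω.2).toReal)
      * Real.sqrt ((F₂ ω.1 * G₂ ω.2).toReal)) ∂((pppBase ρ).prod (pppBase ρ))
      = ENNReal.ofReal (Real.exp (AL - (A₁ + A₂)/2))
        * ENNReal.ofReal (Real.exp (BU - (B₁ + B₂)/2)) := by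
    have hsplit : ∀ ω : ((k : ℕ) × (Fin k → E)) × ((k : ℕ) × (Fin k → E)),
        ENNReal.ofReal (Real.sqrt ((F₁ ω.1 * G₁ ω.2).toReal)
            * Real.sqrt ((F₂ ω.1 * G₂ ω.2).toReal))
          = (fun p => ENNReal.ofReal (Real.sqrt ((F₁ p).toReal)
              * Real.sqrt ((F₂ p).toReal))) ω.1
            * (fun p => ENNReal.ofReal (Real.sqrt ((G₁ p).toReal)
              * Real.sqrt ((G₂ p).toReal))) ω.2 := by
      intro ω
      simp only
      rw [ENNReal.toReal_mul, ENNReal.toReal_mul, Real.sqrt_mul ENNReal.toReal_nonneg,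
        Real.sqrt_mul ENNReal.toReal_nonneg, mul_mul_mul_comm,
        ENNReal.ofReal_mul (mul_nonneg (Real.sqrt_nonneg _) (Real.sqrt_nonneg _))]
    simp_rw [hsplit]
    rw [lintegral_prod_mul hφLm.aemeasurable hφUm.aemeasurable, hlower, hupper]
  rw [hPmass, hQmass, hT, ← ENNReal.ofReal_mul (Real.exp_nonneg _), ← Real.exp_add,
    ENNReal.toReal_ofReal (Real.exp_nonneg _), ENNReal.toReal_one]
  norm_num

end Master

theorem stmt15 (C J₁ J₂ : ℝ) (hC : 0 < C) (hJ₁ : 0 < J₁) (hJ₂ : 0 < J₂)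
    (fD : ℝ → ℝ) (hfDm : Measurable fD) (hfD0 : ∀ x, 0 ≤ fD x)
    (M : ℝ) (hfDbd : ∀ x, fD x ≤ M) (hfD1 : ∫ x in Icc (0:ℝ) 1, fD x = 1)
    (n : ℕ) (θ₁ θ₂ : ℝ → ℝ) (h1m : Measurable θ₁) (h2m : Measurable θ₂)
    (h1b : ∀ x, |θ₁ x| ≤ C) (h2b : ∀ x, |θ₂ x| ≤ C)
    [SigmaFinite (lowerIntensity C J₁ fD n θ₁)] [SigmaFinite (upperIntensity C J₂ fD n θ₁)]
    [SigmaFinite (lowerIntensity C J₁ fD n θ₂)] [SigmaFinite (upperIntensity C J₂ fD n θ₂)] :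
    hellingerSq
        ((pppLaw (lowerIntensity C J₁ fD n θ₁)).prod (pppLaw (upperIntensity C J₂ fD n θ₁)))
        ((pppLaw (lowerIntensity C J₁ fD n θ₂)).prod (pppLaw (upperIntensity C J₂ fD n θ₂)))
      = 2 * (1 - Real.exp (-((n : ℝ) / 2) * (J₁ + J₂) *
          ∫ x in Icc (0:ℝ) 1, |θ₁ x - θ₂ x| * fD x)) := by
  classical
  have hM0 : 0 ≤ M := le_trans (hfD0 0) (hfDbd 0)
  have hn0 : (0:ℝ) ≤ (n:ℝ) := Nat.cast_nonneg n
  have hθ₁l : ∀ x, -C - 1 ≤ θ₁ x := fun x => by have := (abs_le.mp (h1b x)).1; linarith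
  have hθ₁u : ∀ x, θ₁ x ≤ C + 1 := fun x => by have := (abs_le.mp (h1b x)).2; linarith
  have hθ₂l : ∀ x, -C - 1 ≤ θ₂ x := fun x => by have := (abs_le.mp (h2b x)).1; linarith
  have hθ₂u : ∀ x, θ₂ x ≤ C + 1 := fun x => by have := (abs_le.mp (h2b x)).2; linarith
  set ρ : Measure (ℝ × ℝ) := volume.restrict (Icc (0:ℝ) 1 ×ˢ Icc (-C - 1) (C + 1)) with hρ
  haveI : IsFiniteMeasure ρ := by
    constructor
    rw [hρ, Measure.restrict_apply_univ, Measure.volume_eq_prod, Measure.prod_prod,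
      Real.volume_Icc, Real.volume_Icc]
    exact ENNReal.mul_lt_top ENNReal.ofReal_lt_top ENNReal.ofReal_lt_top
  -- intensities as densities against ρ
  have hLow₁ : lowerIntensity C J₁ fD n θ₁
      = ρ.withDensity (bandFn fD (fun _ => -C - 1) θ₁ (n:ℝ) J₁) := by
    have h0 : lowerIntensity C J₁ fD n θ₁
        = volume.withDensity (bandFn fD (fun _ => -C - 1) θ₁ (n:ℝ) J₁) := rfl
    rw [h0, bandFn_restrict (fun _ => le_rfl) hθ₁u, hρ]
  have hLow₂ : lowerIntensity C J₁ fD n θ₂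
      = ρ.withDensity (bandFn fD (fun _ => -C - 1) θ₂ (n:ℝ) J₁) := by
    have h0 : lowerIntensity C J₁ fD n θ₂
        = volume.withDensity (bandFn fD (fun _ => -C - 1) θ₂ (n:ℝ) J₁) := rfl
    rw [h0, bandFn_restrict (fun _ => le_rfl) hθ₂u, hρ]
  have hUp₁ : upperIntensity C J₂ fD n θ₁
      = ρ.withDensity (bandFn fD θ₁ (fun _ => C + 1) (n:ℝ) J₂) := by
    have h0 : upperIntensity C J₂ fD n θ₁
        = volume.withDensity (bandFn fD θ₁ (fun _ => C + 1) (n:ℝ) J₂) := rfl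
    rw [h0, bandFn_restrict hθ₁l (fun _ => le_rfl), hρ]
  have hUp₂ : upperIntensity C J₂ fD n θ₂
      = ρ.withDensity (bandFn fD θ₂ (fun _ => C + 1) (n:ℝ) J₂) := by
    have h0 : upperIntensity C J₂ fD n θ₂
        = volume.withDensity (bandFn fD θ₂ (fun _ => C + 1) (n:ℝ) J₂) := rfl
    rw [h0, bandFn_restrict hθ₂l (fun _ => le_rfl), hρ]
  -- generic computation of the band integrals
  have gen : ∀ (a b : ℝ → ℝ), Measurable a → Measurable b → (∀ x, -C - 1 ≤ a x) →
      (∀ x, a x ≤ b x) → (∀ x, b x ≤ C + 1) → ∀ (c' : ℝ), 0 ≤ c' →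
      (∫⁻ z, bandFn fD a b (n:ℝ) c' z ∂ρ
        = ENNReal.ofReal (∫ x in Icc (0:ℝ) 1, fD x * (n:ℝ) * c' * (b x - a x)))
      ∧ IntegrableOn (fun x => fD x * (n:ℝ) * c' * (b x - a x)) (Icc (0:ℝ) 1) volume
      ∧ 0 ≤ ∫ x in Icc (0:ℝ) 1, fD x * (n:ℝ) * c' * (b x - a x) := by
    intro a b ham hbm ha hab hb c' hc'
    have hK : ∀ x, b x - a x ≤ 2*C + 2 := fun x => by
      have := ha x; have := hb x; linarith
    refine ⟨?_, ?_, ?_⟩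
    · have h1 : ∫⁻ z, bandFn fD a b (n:ℝ) c' z ∂ρ
          = (ρ.withDensity (bandFn fD a b (n:ℝ) c')) univ := by
        rw [withDensity_apply _ MeasurableSet.univ, Measure.restrict_univ]
      rw [h1, hρ, ← bandFn_restrict ha hb, withDensity_apply _ MeasurableSet.univ,
        Measure.restrict_univ, bandFn_lintegral hfDm hfD0 hfDbd ham hbm hab hK hn0 hc']
    · refine my_integrableOn (((hfDm.mul_const _).mul_const _).mul (hbm.sub ham))
        (K := M * (n:ℝ) * c' * (2*C + 2)) fun x => ?_
      have h1 : 0 ≤ fD x * (n:ℝ) * c' := mul_nonneg (mul_nonneg (hfD0 x) hn0) hc'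
      have h2 : 0 ≤ b x - a x := sub_nonneg.mpr (hab x)
      rw [abs_of_nonneg (mul_nonneg h1 h2)]
      exact mul_le_mul (mul_le_mul_of_nonneg_right
          (mul_le_mul_of_nonneg_right (hfDbd x) hn0) hc') (hK x) h2
        (mul_nonneg (mul_nonneg hM0 hn0) hc')
    · exact setIntegral_nonneg measurableSet_Icc fun x _ =>
        mul_nonneg (mul_nonneg (mul_nonneg (hfD0 x) hn0) hc') (sub_nonneg.mpr (hab x))
  obtain ⟨hL₁, iL₁, nL₁⟩ := gen (fun _ => -C - 1) θ₁ measurable_const h1m (fun _ => le_rfl)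
    hθ₁l hθ₁u J₁ hJ₁.le
  obtain ⟨hL₂, iL₂, nL₂⟩ := gen (fun _ => -C - 1) θ₂ measurable_const h2m (fun _ => le_rfl)
    hθ₂l hθ₂u J₁ hJ₁.le
  obtain ⟨hLm, iLm, nLm⟩ := gen (fun _ => -C - 1) (fun x => min (θ₁ x) (θ₂ x)) measurable_const
    (h1m.min h2m) (fun _ => le_rfl) (fun x => le_min (hθ₁l x) (hθ₂l x))
    (fun x => le_trans (min_le_left _ _) (hθ₁u x)) J₁ hJ₁.le
  obtain ⟨hU₁, iU₁, nU₁⟩ := gen θ₁ (fun _ => C + 1) h1m measurable_const hθ₁l hθ₁u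
    (fun _ => le_rfl) J₂ hJ₂.le
  obtain ⟨hU₂, iU₂, nU₂⟩ := gen θ₂ (fun _ => C + 1) h2m measurable_const hθ₂l hθ₂u
    (fun _ => le_rfl) J₂ hJ₂.le
  obtain ⟨hUm, iUm, nUm⟩ := gen (fun x => max (θ₁ x) (θ₂ x)) (fun _ => C + 1) (h1m.max h2m)
    measurable_const (fun x => le_trans (hθ₁l x) (le_max_left _ _))
    (fun x => max_le (hθ₁u x) (hθ₂u x)) (fun _ => le_rfl) J₂ hJ₂.le
  -- cross integrals
  have hALeq : ∫⁻ z, ENNReal.ofReal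
      (Real.sqrt ((bandFn fD (fun _ => -C - 1) θ₁ (n:ℝ) J₁ z).toReal)
        * Real.sqrt ((bandFn fD (fun _ => -C - 1) θ₂ (n:ℝ) J₁ z).toReal)) ∂ρ
      = ENNReal.ofReal (∫ x in Icc (0:ℝ) 1,
          fD x * (n:ℝ) * J₁ * (min (θ₁ x) (θ₂ x) - (-C - 1))) := by
    refine Eq.trans (lintegral_congr fun z =>
      congrFun (bandFn_cross_min hfD0 (fun _ => -C - 1) θ₁ θ₂ hn0 hJ₁.le) z) ?_
    exact hLm
  have hBUeq : ∫⁻ z, ENNReal.ofReal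
      (Real.sqrt ((bandFn fD θ₁ (fun _ => C + 1) (n:ℝ) J₂ z).toReal)
        * Real.sqrt ((bandFn fD θ₂ (fun _ => C + 1) (n:ℝ) J₂ z).toReal)) ∂ρ
      = ENNReal.ofReal (∫ x in Icc (0:ℝ) 1,
          fD x * (n:ℝ) * J₂ * ((C + 1) - max (θ₁ x) (θ₂ x))) := by
    refine Eq.trans (lintegral_congr fun z =>
      congrFun (bandFn_cross_max hfD0 θ₁ θ₂ (fun _ => C + 1) hn0 hJ₂.le) z) ?_
    exact hUm
  -- instances
  haveI : SigmaFinite (ρ.withDensity (bandFn fD (fun _ => -C - 1) θ₁ (n:ℝ) J₁)) :=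
    hLow₁ ▸ ‹SigmaFinite (lowerIntensity C J₁ fD n θ₁)›
  haveI : SigmaFinite (ρ.withDensity (bandFn fD (fun _ => -C - 1) θ₂ (n:ℝ) J₁)) :=
    hLow₂ ▸ ‹SigmaFinite (lowerIntensity C J₁ fD n θ₂)›
  haveI : SigmaFinite (ρ.withDensity (bandFn fD θ₁ (fun _ => C + 1) (n:ℝ) J₂)) :=
    hUp₁ ▸ ‹SigmaFinite (upperIntensity C J₂ fD n θ₁)›
  haveI : SigmaFinite (ρ.withDensity (bandFn fD θ₂ (fun _ => C + 1) (n:ℝ) J₂)) :=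
    hUp₂ ▸ ‹SigmaFinite (upperIntensity C J₂ fD n θ₂)›
  rw [my_pppLaw_congr hLow₁, my_pppLaw_congr hLow₂, my_pppLaw_congr hUp₁,
    my_pppLaw_congr hUp₂,
    my_hellinger_ppp ρ
      (bandFn fD (fun _ => -C - 1) θ₁ (n:ℝ) J₁) (bandFn fD (fun _ => -C - 1) θ₂ (n:ℝ) J₁)
      (bandFn fD θ₁ (fun _ => C + 1) (n:ℝ) J₂) (bandFn fD θ₂ (fun _ => C + 1) (n:ℝ) J₂)
      (bandFn_measurable hfDm measurable_const h1m _ _)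
      (bandFn_measurable hfDm measurable_const h2m _ _)
      (bandFn_measurable hfDm h1m measurable_const _ _)
      (bandFn_measurable hfDm h2m measurable_const _ _)
      (bandFn_ne_top _ _ _ _ _) (bandFn_ne_top _ _ _ _ _)
      (bandFn_ne_top _ _ _ _ _) (bandFn_ne_top _ _ _ _ _)
      (∫ x in Icc (0:ℝ) 1, fD x * (n:ℝ) * J₁ * (θ₁ x - (-C - 1)))
      (∫ x in Icc (0:ℝ) 1, fD x * (n:ℝ) * J₁ * (θ₂ x - (-C - 1)))
      (∫ x in Icc (0:ℝ) 1, fD x * (n:ℝ) * J₁ * (min (θ₁ x) (θ₂ x) - (-C - 1)))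
      (∫ x in Icc (0:ℝ) 1, fD x * (n:ℝ) * J₂ * ((C + 1) - θ₁ x))
      (∫ x in Icc (0:ℝ) 1, fD x * (n:ℝ) * J₂ * ((C + 1) - θ₂ x))
      (∫ x in Icc (0:ℝ) 1, fD x * (n:ℝ) * J₂ * ((C + 1) - max (θ₁ x) (θ₂ x)))
      hL₁ nL₁ hL₂ nL₂ hU₁ nU₁ hU₂ nU₂ hALeq nLm hBUeq nUm]
  -- the exponent identity
  have iL₁' : Integrable (fun x => fD x * (n:ℝ) * J₁ * (θ₁ x - (-C - 1)))
      (volume.restrict (Icc (0:ℝ) 1)) := iL₁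
  have iL₂' : Integrable (fun x => fD x * (n:ℝ) * J₁ * (θ₂ x - (-C - 1)))
      (volume.restrict (Icc (0:ℝ) 1)) := iL₂
  have iLm' : Integrable (fun x => fD x * (n:ℝ) * J₁ * (min (θ₁ x) (θ₂ x) - (-C - 1)))
      (volume.restrict (Icc (0:ℝ) 1)) := iLm
  have iU₁' : Integrable (fun x => fD x * (n:ℝ) * J₂ * ((C + 1) - θ₁ x))
      (volume.restrict (Icc (0:ℝ) 1)) := iU₁
  have iU₂' : Integrable (fun x => fD x * (n:ℝ) * J₂ * ((C + 1) - θ₂ x))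
      (volume.restrict (Icc (0:ℝ) 1)) := iU₂
  have iUm' : Integrable (fun x => fD x * (n:ℝ) * J₂ * ((C + 1) - max (θ₁ x) (θ₂ x)))
      (volume.restrict (Icc (0:ℝ) 1)) := iUm
  have hE : ((∫ x in Icc (0:ℝ) 1, fD x * (n:ℝ) * J₁ * (min (θ₁ x) (θ₂ x) - (-C - 1)))
        - ((∫ x in Icc (0:ℝ) 1, fD x * (n:ℝ) * J₁ * (θ₁ x - (-C - 1)))
          + (∫ x in Icc (0:ℝ) 1, fD x * (n:ℝ) * J₁ * (θ₂ x - (-C - 1)))) / 2)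
      + ((∫ x in Icc (0:ℝ) 1, fD x * (n:ℝ) * J₂ * ((C + 1) - max (θ₁ x) (θ₂ x)))
        - ((∫ x in Icc (0:ℝ) 1, fD x * (n:ℝ) * J₂ * ((C + 1) - θ₁ x))
          + (∫ x in Icc (0:ℝ) 1, fD x * (n:ℝ) * J₂ * ((C + 1) - θ₂ x))) / 2)
      = -((n:ℝ) / 2) * (J₁ + J₂) * ∫ x in Icc (0:ℝ) 1, |θ₁ x - θ₂ x| * fD x := by
    have iL12 : Integrable (fun x => (fD x * (n:ℝ) * J₁ * (θ₁ x - (-C - 1))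
        + fD x * (n:ℝ) * J₁ * (θ₂ x - (-C - 1))) / 2)
        (volume.restrict (Icc (0:ℝ) 1)) := (iL₁'.add iL₂').div_const 2
    have iU12 : Integrable (fun x => (fD x * (n:ℝ) * J₂ * ((C + 1) - θ₁ x)
        + fD x * (n:ℝ) * J₂ * ((C + 1) - θ₂ x)) / 2)
        (volume.restrict (Icc (0:ℝ) 1)) := (iU₁'.add iU₂').div_const 2
    have iLtot : Integrable (fun x => fD x * (n:ℝ) * J₁ * (min (θ₁ x) (θ₂ x) - (-C - 1))
        - (fD x * (n:ℝ) * J₁ * (θ₁ x - (-C - 1))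
          + fD x * (n:ℝ) * J₁ * (θ₂ x - (-C - 1))) / 2)
        (volume.restrict (Icc (0:ℝ) 1)) := iLm'.sub iL12
    have iUtot : Integrable (fun x => fD x * (n:ℝ) * J₂ * ((C + 1) - max (θ₁ x) (θ₂ x))
        - (fD x * (n:ℝ) * J₂ * ((C + 1) - θ₁ x)
          + fD x * (n:ℝ) * J₂ * ((C + 1) - θ₂ x)) / 2)
        (volume.restrict (Icc (0:ℝ) 1)) := iUm'.sub iU12
    rw [← integral_add iL₁' iL₂', ← integral_div, ← integral_sub iLm' iL12,
      ← integral_add iU₁' iU₂', ← integral_div, ← integral_sub iUm' iU12,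
      ← integral_add iLtot iUtot, ← integral_const_mul]
    refine integral_congr_ae (Filter.Eventually.of_forall fun x => ?_)
    obtain ⟨hmn, hmx⟩ := my_minmax (θ₁ x) (θ₂ x)
    simp only
    linear_combination (fD x * (n:ℝ) * J₁) * hmn + (fD x * (n:ℝ) * J₂) * hmx
  rw [hE]
  ring
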